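/- Let 0 < s < 1, let N be a positive integer, let b > 0, and let h : ℝ → ℝ be integrable, nonnegative, and vanishing outside [b, b+1]. Define v : ℝ² → ℝ by v(ξ) = h(|ξ|)·sin(N·θ(ξ)), where θ(ξ) ∈ [0,2π) is the angular polar coordinate of ξ ≠ 0. Let P(x,y) = C_{2,s}·y^{2s}/(|x|² + y²)^{1+s} be the Poisson kernel for the Caffarelli–Silvestre extension in ℝ²×(0,∞), normalized so that ∫_{ℝ²} P(x,y) dx = 1 for every y > 0, and define V(x,y) = ∫_{ℝ²} P(x − ξ, y) v(ξ) dξ. Then for every rotation angle φ ∈ ℝ, every x ∈ ℝ², and every y > 0, V(R_φ x, y) = cos(Nφ)·V(x,y) + sin(Nφ)·V(R_{π/(2N)} x, y), where R_φ denotes the rotation of ℝ² by angle φ about the origin. -/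

import Mathlib

open MeasureTheory Real
open scoped ENNReal


private lemma integrable_comap_iff' {α : Type*} [MeasurableSpace α] {μ : Measure α}
    {s : Set α} (hs : MeasurableSet s) (f : α → ℝ) :
    Integrable (fun x : s => f x) (μ.comap Subtype.val) ↔ IntegrableOn f s μ := by
  rw [IntegrableOn, ← map_comap_subtype_coe hs,
    (MeasurableEmbedding.subtype_coe hs).integrable_map_iff]
  rfl

private lemma radial_integrable {h : ℝ → ℝ} (hhmeas : Measurable h) (hhint : Integrable h)
    {b : ℝ} (hb : 0 < b) (hhsupp : ∀ t, t ∉ Set.Icc b (b + 1) → h t = 0) :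
    Integrable (fun ξ : ℂ => h (‖ξ‖)) := by
  have h1 : IntegrableOn (fun r : ℝ => h r * (ENNReal.ofReal (r ^ 1)).toReal) (Set.Ioi 0) := by
    apply Integrable.integrableOn
    apply Integrable.mono' (g := fun r : ℝ => (b + 1) * |h r|)
      ((hhint.norm.const_mul (b + 1)))
    · exact ((hhmeas.mul
        ((measurable_id.pow_const 1).ennreal_ofReal.ennreal_toReal))).aestronglyMeasurable
    · filter_upwards with r
      rcases Classical.em (r ∈ Set.Icc b (b + 1)) with hr | hr
      · have h0r : (0:ℝ) ≤ r := le_trans hb.le hr.1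
        rw [Real.norm_eq_abs, abs_mul, pow_one, ENNReal.toReal_ofReal h0r, abs_of_nonneg h0r,
          mul_comm]
        exact mul_le_mul_of_nonneg_right hr.2 (abs_nonneg _)
      · rw [hhsupp r hr, zero_mul, norm_zero]
        positivity
  have h2 : Integrable (fun r : Set.Ioi (0:ℝ) => h r.1) (Measure.volumeIoiPow 1) := by
    rw [Measure.volumeIoiPow, integrable_withDensity_iff
      ((measurable_subtype_coe.pow_const 1).ennreal_ofReal)
      (Filter.Eventually.of_forall fun _ => ENNReal.ofReal_lt_top)]
    exact (integrable_comap_iff' measurableSet_Ioi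
      (fun r : ℝ => h r * (ENNReal.ofReal (r ^ 1)).toReal)).2 h1
  have h3 : Integrable (fun p : Metric.sphere (0:ℂ) 1 × Set.Ioi (0:ℝ) => h p.2.1)
      (volume.toSphere.prod (Measure.volumeIoiPow (Module.finrank ℝ ℂ - 1))) := by
    have : Module.finrank ℝ ℂ - 1 = 1 := by rw [Complex.finrank_real_complex]
    rw [this]
    simpa using (integrable_const (1:ℝ)).mul_prod h2
  have h4 := ((Measure.measurePreserving_homeomorphUnitSphereProd
      (volume : Measure ℂ)).integrable_comp_emb
      (Homeomorph.measurableEmbedding _)).2 h3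
  have h5 : Integrable (fun x : ({0}ᶜ : Set ℂ) => h ‖x.1‖)
      ((volume : Measure ℂ).comap Subtype.val) := by
    simpa [Function.comp_def, homeomorphUnitSphereProd_apply_snd_coe] using h4
  have h6 := (integrable_comap_iff' (MeasurableSet.singleton (0:ℂ)).compl
    (fun x : ℂ => h ‖x‖)).1 h5
  rw [IntegrableOn, MeasureTheory.restrict_compl_singleton] at h6
  simpa using h6

private lemma arg_exp_coe_angle (θ : ℝ) :
    ((Complex.arg (Complex.exp (θ * Complex.I)) : ℝ) : Real.Angle) = (θ : Real.Angle) := by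
  rw [Complex.arg_exp_mul_I, Real.Angle.angle_eq_iff_two_pi_dvd_sub]
  refine ⟨-(toIocDiv (mul_pos two_pos Real.pi_pos) (-π) θ), ?_⟩
  rw [toIocMod, zsmul_eq_mul]
  push_cast
  ring

private lemma sin_nat_arg_rot (N : ℕ) (α : ℝ) {ξ : ℂ} (hξ : ξ ≠ 0) :
    Real.sin (N * Complex.arg (Complex.exp ((α : ℂ) * Complex.I) * ξ)) =
      Real.sin (N * (α + Complex.arg ξ)) := by
  have h1 : ((Complex.arg (Complex.exp ((α : ℂ) * Complex.I) * ξ) : ℝ) : Real.Angle)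
      = ((α + Complex.arg ξ : ℝ) : Real.Angle) := by
    rw [Complex.arg_mul_coe_angle (Complex.exp_ne_zero _) hξ, arg_exp_coe_angle,
      Real.Angle.coe_add]
  calc Real.sin (N * Complex.arg (Complex.exp ((α : ℂ) * Complex.I) * ξ))
      = Real.Angle.sin ((N • (Complex.arg (Complex.exp ((α : ℂ) * Complex.I) * ξ) : ℝ) : ℝ)) := by
        rw [Real.Angle.sin_coe, nsmul_eq_mul]
    _ = Real.Angle.sin
        (N • ((Complex.arg (Complex.exp ((α : ℂ) * Complex.I) * ξ) : ℝ) : Real.Angle)) := by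
        rw [Real.Angle.coe_nsmul]
    _ = Real.Angle.sin (N • ((α + Complex.arg ξ : ℝ) : Real.Angle)) := by rw [h1]
    _ = Real.sin (N * (α + Complex.arg ξ)) := by
        rw [← Real.Angle.coe_nsmul, Real.Angle.sin_coe, nsmul_eq_mul]

private lemma rot_integral_comp (α : ℝ) (g : ℂ → ℝ) :
    (∫ ξ : ℂ, g ξ) = ∫ ξ : ℂ, g (Complex.exp ((α : ℂ) * Complex.I) * ξ) := by
  have := ((rotation (Circle.exp α)).measurePreserving).integral_comp
    ((rotation (Circle.exp α)).toHomeomorph.measurableEmbedding) g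
  rw [show (∫ ξ : ℂ, g (Complex.exp ((α : ℂ) * Complex.I) * ξ)) =
      ∫ ξ : ℂ, g ((rotation (Circle.exp α)) ξ) from by
    simp_rw [rotation_apply, Circle.coe_exp]]
  exact this.symm

/-- rotation formula for the Caffarelli–Silvestre extension of
`v(ξ) = h(|ξ|)·sin(N·θ(ξ))`: for every rotation angle `φ`, every `x ∈ ℝ² ≅ ℂ` and `y > 0`,
`V(R_φ x, y) = cos(Nφ)·V(x,y) + sin(Nφ)·V(R_{π/(2N)} x, y)`. -/
theorem extension_rotation_formula (s : ℝ) (hs0 : 0 < s) (hs1 : s < 1)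
    (N : ℕ) (hN : 0 < N) (b : ℝ) (hb : 0 < b)
    (h : ℝ → ℝ) (hhmeas : Measurable h) (hhint : Integrable h)
    (hhnonneg : ∀ t, 0 ≤ h t)
    (hhsupp : ∀ t, t ∉ Set.Icc b (b + 1) → h t = 0)
    (C : ℝ) (hC : 0 < C)
    (hnorm : ∀ y : ℝ, 0 < y →
      (∫ x : ℂ, C * y ^ (2 * s) / (‖x‖ ^ 2 + y ^ 2) ^ (1 + s)) = 1)
    (v : ℂ → ℝ) (hv : ∀ ξ : ℂ, v ξ = h (‖ξ‖) * Real.sin (N * Complex.arg ξ))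
    (V : ℂ → ℝ → ℝ)
    (hV : ∀ (x : ℂ) (y : ℝ), V x y =
      ∫ ξ : ℂ, C * y ^ (2 * s) / (‖x - ξ‖ ^ 2 + y ^ 2) ^ (1 + s) * v ξ) :
    ∀ (φ : ℝ) (x : ℂ) (y : ℝ), 0 < y →
      V (Complex.exp (φ * Complex.I) * x) y =
        Real.cos (N * φ) * V x y +
          Real.sin (N * φ) * V (Complex.exp ((π / (2 * N)) * Complex.I) * x) y := by
  intro φ x y hy
  have hN' : (N:ℝ) ≠ 0 := Nat.cast_ne_zero.2 hN.ne'
  set β : ℝ := π / (2 * N) with hβdef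
  have hβc : ((β : ℝ) : ℂ) = (π / (2 * N) : ℂ) := by rw [hβdef]; push_cast; ring
  -- the key pointwise identity for `v`
  have key : ∀ ξ : ℂ, v (Complex.exp ((φ:ℂ) * Complex.I) * ξ) =
      Real.cos (N * φ) * v ξ + Real.sin (N * φ) * v (Complex.exp ((β:ℂ) * Complex.I) * ξ) := by
    intro ξ
    rcases eq_or_ne ξ 0 with rfl | hξ
    · simp [hv, Complex.arg_zero]
    · rw [hv, hv, hv]
      simp only [norm_mul, Complex.norm_exp_ofReal_mul_I, one_mul]
      rw [sin_nat_arg_rot N φ hξ, sin_nat_arg_rot N β hξ]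
      have e2 : Real.sin ((N:ℝ) * (β + Complex.arg ξ)) = Real.cos (N * Complex.arg ξ) := by
        rw [mul_add, show (N:ℝ) * β = π/2 by rw [hβdef]; field_simp,
          Real.sin_add, Real.sin_pi_div_two, Real.cos_pi_div_two]
        ring
      rw [e2, mul_add, Real.sin_add]
      ring
  -- measurability of `v`
  have hvmeas : Measurable v := by
    have hveq : v = fun ξ => h (‖ξ‖) * Real.sin (N * Complex.arg ξ) := funext hv
    rw [hveq]
    exact (hhmeas.comp continuous_norm.measurable).mul
      (Real.measurable_sin.comp (measurable_const.mul Complex.measurable_arg))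
  -- continuity of the Poisson kernel in `ξ`
  have hPcont : ∀ x' : ℂ,
      Continuous (fun ξ : ℂ => C * y ^ (2*s) / (‖x' - ξ‖^2 + y^2)^(1+s)) := by
    intro x'
    apply Continuous.div continuous_const
    · exact (((continuous_norm.comp (continuous_const.sub continuous_id)).pow 2).add
        continuous_const).rpow_const (fun ξ => Or.inr (by positivity))
    · intro ξ
      have hpos : (0:ℝ) < ‖x' - ξ‖^2 + y^2 := by positivity
      exact (Real.rpow_pos_of_pos hpos _).ne'
  -- integrability of the integrands
  have hint : ∀ (x' : ℂ) (α : ℝ), Integrable (fun ξ : ℂ =>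
      C * y ^ (2*s) / (‖x' - ξ‖^2 + y^2)^(1+s)
        * v (Complex.exp ((α:ℂ) * Complex.I) * ξ)) := by
    intro x' α
    have hrad := radial_integrable hhmeas hhint hb hhsupp
    apply Integrable.mono' (g := fun ξ : ℂ => (C * y^(2*s) / (y^2)^(1+s)) * h (‖ξ‖))
      (hrad.const_mul _)
    · exact ((hPcont x').measurable.mul
        (hvmeas.comp (measurable_const.mul measurable_id))).aestronglyMeasurable
    · filter_upwards with ξ
      have habs : ‖Complex.exp ((α:ℂ)*Complex.I) * ξ‖ = ‖ξ‖ := by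
        rw [norm_mul, Complex.norm_exp_ofReal_mul_I, one_mul]
      have h1 : |C * y^(2*s) / (‖x'-ξ‖^2 + y^2)^(1+s)|
          ≤ C*y^(2*s)/(y^2)^(1+s) := by
        rw [abs_of_nonneg (by positivity)]
        exact div_le_div_of_nonneg_left (by positivity)
          (Real.rpow_pos_of_pos (by positivity) _)
          (Real.rpow_le_rpow (by positivity)
            (le_add_of_nonneg_left (by positivity)) (by positivity))
      have h2 : |v (Complex.exp ((α:ℂ)*Complex.I) * ξ)| ≤ h (‖ξ‖) := by
        rw [hv, habs, abs_mul]
        calc |h (‖ξ‖)| * |Real.sin (N * Complex.arg (Complex.exp ((α:ℂ)*Complex.I) * ξ))|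
            ≤ |h (‖ξ‖)| * 1 := by
              apply mul_le_mul_of_nonneg_left _ (abs_nonneg _)
              exact abs_le.mpr ⟨Real.neg_one_le_sin _, Real.sin_le_one _⟩
          _ = h (‖ξ‖) := by rw [mul_one, abs_of_nonneg (hhnonneg _)]
      rw [Real.norm_eq_abs, abs_mul]
      exact mul_le_mul h1 h2 (abs_nonneg _) (by positivity)
  -- change of variables
  have step : ∀ α : ℝ,
      (∫ ξ : ℂ, C * y ^ (2*s) /
          (‖Complex.exp ((α:ℂ)*Complex.I) * x - ξ‖^2 + y^2)^(1+s) * v ξ)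
      = ∫ ξ : ℂ, C * y ^ (2*s) / (‖x - ξ‖^2 + y^2)^(1+s)
          * v (Complex.exp ((α:ℂ)*Complex.I) * ξ) := by
    intro α
    rw [rot_integral_comp α (fun ξ => C * y ^ (2*s) /
        (‖Complex.exp ((α:ℂ)*Complex.I) * x - ξ‖^2 + y^2)^(1+s) * v ξ)]
    apply integral_congr_ae
    filter_upwards with ξ
    rw [show Complex.exp ((α:ℂ)*Complex.I) * x - Complex.exp ((α:ℂ)*Complex.I) * ξ
        = Complex.exp ((α:ℂ)*Complex.I) * (x - ξ) from (mul_sub _ _ _).symm,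
      norm_mul, Complex.norm_exp_ofReal_mul_I, one_mul]
  have hint0 : Integrable (fun ξ : ℂ =>
      C * y ^ (2*s) / (‖x - ξ‖^2 + y^2)^(1+s) * v ξ) := by
    simpa using hint x 0
  rw [hV, hV, hV, ← hβc]
  calc (∫ ξ : ℂ, C * y^(2*s) /
          (‖Complex.exp ((φ:ℂ)*Complex.I)*x - ξ‖^2 + y^2)^(1+s) * v ξ)
      = ∫ ξ : ℂ, C * y^(2*s) / (‖x - ξ‖^2 + y^2)^(1+s)
          * v (Complex.exp ((φ:ℂ)*Complex.I)*ξ) := step φ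
    _ = ∫ ξ : ℂ, (Real.cos (N*φ) * (C * y^(2*s) / (‖x - ξ‖^2 + y^2)^(1+s) * v ξ)
          + Real.sin (N*φ) * (C * y^(2*s) / (‖x - ξ‖^2 + y^2)^(1+s)
              * v (Complex.exp ((β:ℂ)*Complex.I)*ξ))) := by
        apply integral_congr_ae
        filter_upwards with ξ
        rw [key ξ]
        ring
    _ = Real.cos (N*φ) * (∫ ξ : ℂ, C * y^(2*s) /
            (‖x - ξ‖^2 + y^2)^(1+s) * v ξ)
          + Real.sin (N*φ) * ∫ ξ : ℂ, C * y^(2*s) /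
            (‖x - ξ‖^2 + y^2)^(1+s) * v (Complex.exp ((β:ℂ)*Complex.I)*ξ) := by
        rw [integral_add (hint0.const_mul _) ((hint x β).const_mul _),
          integral_const_mul, integral_const_mul]
    _ = Real.cos (N*φ) * (∫ ξ : ℂ, C * y^(2*s) /
            (‖x - ξ‖^2 + y^2)^(1+s) * v ξ)
          + Real.sin (N*φ) * ∫ ξ : ℂ, C * y^(2*s) /
            (‖Complex.exp ((β:ℂ)*Complex.I)*x - ξ‖^2 + y^2)^(1+s) * v ξ := by
        rw [← step β]
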